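/- Suppose f(s) > 0 for all s ∈ (0,1), m_H(s) − m_L(s) > 0 for all s ∈ (0,1), and the escalation benefit m_H − m_L is weakly decreasing on (0,1). Let B ∈ (c_L, c_L + c_H) and let τ_B ∈ (0,1) be the unique threshold with C(τ_B) = B. Then there is zero duality gap for the budget-constrained problem: inf over λ ≥ 0 of sup over τ ∈ [0,1] of [U(τ) − λ·(C(τ) − B)] equals U†(B) = sup{ U(τ) : τ ∈ [0,1], C(τ) ≤ B }, and the infimum is attained at the shadow price λ* = (m_H(τ_B) − m_L(τ_B)) / c_H. -/

import Mathlib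

open MeasureTheory

/-- Under positivity of `f`, positive and weakly decreasing
escalation benefit on `(0,1)`, and an interior budget `B ∈ (cL, cL + cH)` with
unique threshold `τ_B ∈ (0,1)` satisfying `C τ_B = B`: the budget-constrained
problem has zero duality gap,
`inf_{λ ≥ 0} sup_{τ ∈ [0,1]} [U τ - λ (C τ - B)] = U†(B)`, and the dual
infimum is attained at the shadow price `λ* = (mH τ_B - mL τ_B) / cH`. -/
theorem two_model_cascade_zero_duality_gap
    (f mL mH : ℝ → ℝ) (hf : Continuous f)
    (hf0 : ∀ s ∈ Set.Icc (0:ℝ) 1, 0 ≤ f s)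
    (hfint : (∫ s in (0:ℝ)..1, f s) = 1)
    (hmL : Continuous mL) (hmH : Continuous mH)
    (cL cH : ℝ) (hcL : 0 ≤ cL) (hcH : 0 < cH)
    (C U : ℝ → ℝ)
    (hC : ∀ τ, C τ = cL + cH * ∫ s in (0:ℝ)..τ, f s)
    (hU : ∀ τ, U τ = (∫ s in (0:ℝ)..τ, mH s * f s) + ∫ s in τ..(1:ℝ), mL s * f s)
    (hfpos : ∀ s ∈ Set.Ioo (0:ℝ) 1, 0 < f s)
    (hdom : ∀ s ∈ Set.Ioo (0:ℝ) 1, 0 < mH s - mL s)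
    (hdec : ∀ s' ∈ Set.Ioo (0:ℝ) 1, ∀ s'' ∈ Set.Ioo (0:ℝ) 1, s'' < s' →
      mH s' - mL s' ≤ mH s'' - mL s'')
    (B : ℝ) (hB : B ∈ Set.Ioo cL (cL + cH))
    (τB : ℝ) (hτB : τB ∈ Set.Ioo (0:ℝ) 1) (hCτB : C τB = B)
    (D : ℝ → ℝ)
    (hD : ∀ lam, D lam = sSup {v : ℝ | ∃ τ ∈ Set.Icc (0:ℝ) 1, v = U τ - lam * (C τ - B)})
    (Udag : ℝ)
    (hUdag : Udag = sSup {u : ℝ | ∃ τ ∈ Set.Icc (0:ℝ) 1, C τ ≤ B ∧ u = U τ}) :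
    sInf {d : ℝ | ∃ lam : ℝ, 0 ≤ lam ∧ d = D lam} = Udag ∧
    D ((mH τB - mL τB) / cH) = Udag := by
  classical
  obtain ⟨hτB0, hτB1⟩ := hτB
  have hglam : (mH τB - mL τB) / cH * cH = mH τB - mL τB := div_mul_cancel₀ _ (ne_of_gt hcH)
  have hlam_pos : 0 < (mH τB - mL τB) / cH := div_pos (hdom τB ⟨hτB0, hτB1⟩) hcH
  set lamS : ℝ := (mH τB - mL τB) / cH with hlamS
  -- integrability facts
  have hiH : ∀ a b : ℝ, IntervalIntegrable (fun s => mH s * f s) volume a b :=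
    fun a b => (hmH.mul hf).intervalIntegrable a b
  have hiL : ∀ a b : ℝ, IntervalIntegrable (fun s => mL s * f s) volume a b :=
    fun a b => (hmL.mul hf).intervalIntegrable a b
  have hif : ∀ a b : ℝ, IntervalIntegrable f volume a b :=
    fun a b => hf.intervalIntegrable a b
  have hih : ∀ a b : ℝ, IntervalIntegrable
      (fun s => ((mH s - mL s) - (mH τB - mL τB)) * f s) volume a b :=
    fun a b => (((hmH.sub hmL).sub continuous_const).mul hf).intervalIntegrable a b
  -- key identity
  have hkey : ∀ τ : ℝ, U τ - lamS * (C τ - B)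
      = U τB + ∫ s in τB..τ, ((mH s - mL s) - (mH τB - mL τB)) * f s := by
    intro τ
    have hCd : C τ - B = cH * ∫ s in τB..τ, f s := by
      rw [hC, ← hCτB, hC]
      rw [← intervalIntegral.integral_interval_sub_left (hif 0 τ) (hif 0 τB)]
      ring
    have h1 : (∫ s in (0:ℝ)..τ, mH s * f s) - ∫ s in (0:ℝ)..τB, mH s * f s
        = ∫ s in τB..τ, mH s * f s :=
      intervalIntegral.integral_interval_sub_left (hiH 0 τ) (hiH 0 τB)
    have h2 : (∫ s in τ..(1:ℝ), mL s * f s)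
        = (∫ s in τ..τB, mL s * f s) + ∫ s in τB..(1:ℝ), mL s * f s :=
      (intervalIntegral.integral_add_adjacent_intervals (hiL τ τB) (hiL τB 1)).symm
    have h3 : (∫ s in τ..τB, mL s * f s) = - ∫ s in τB..τ, mL s * f s :=
      intervalIntegral.integral_symm τB τ
    have hUd : U τ - U τB
        = (∫ s in τB..τ, mH s * f s) - ∫ s in τB..τ, mL s * f s := by
      rw [hU, hU, h2, h3]
      linarith [h1]
    have hlc : lamS * (C τ - B) = (mH τB - mL τB) * ∫ s in τB..τ, f s := by
      rw [hCd, hlamS, ← mul_assoc, div_mul_cancel₀ _ (ne_of_gt hcH)]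
    have hptw : ∀ s : ℝ, ((mH s - mL s) - (mH τB - mL τB)) * f s
        = mH s * f s - mL s * f s - (mH τB - mL τB) * f s := fun s => by ring
    have hsub : (∫ s in τB..τ, ((mH s - mL s) - (mH τB - mL τB)) * f s)
        = ((∫ s in τB..τ, mH s * f s) - ∫ s in τB..τ, mL s * f s)
          - (mH τB - mL τB) * ∫ s in τB..τ, f s := by
      simp only [hptw]
      rw [intervalIntegral.integral_sub ((hiH τB τ).sub (hiL τB τ))
          ((hif τB τ).const_mul (mH τB - mL τB)),
        intervalIntegral.integral_sub (hiH τB τ) (hiL τB τ),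
        intervalIntegral.integral_const_mul]
    rw [hsub, ← hlc]
    linarith [hUd]
  -- a.e. helper
  have hne1 : ∀ᵐ s : ℝ, s ≠ 1 := by
    rw [ae_iff]
    simpa using measure_singleton (1:ℝ)
  have hne0 : ∀ᵐ s : ℝ, s ≠ 0 := by
    rw [ae_iff]
    simpa using measure_singleton (0:ℝ)
  -- sign lemma
  have hsign : ∀ τ ∈ Set.Icc (0:ℝ) 1,
      (∫ s in τB..τ, ((mH s - mL s) - (mH τB - mL τB)) * f s) ≤ 0 := by
    intro τ hτ
    obtain ⟨hτ0, hτ1⟩ := hτ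
    rcases le_total τB τ with hle | hle
    · have hnn : 0 ≤ ∫ s in τB..τ, -(((mH s - mL s) - (mH τB - mL τB)) * f s) := by
        apply intervalIntegral.integral_nonneg_of_ae_restrict hle
        filter_upwards [ae_restrict_of_ae hne1, ae_restrict_mem measurableSet_Icc]
          with s hs1 hs2
        simp only [Pi.zero_apply]
        obtain ⟨hsl, hsr⟩ := hs2
        have hs01 : s ∈ Set.Icc (0:ℝ) 1 := ⟨le_trans hτB0.le hsl, le_trans hsr hτ1⟩
        rcases eq_or_lt_of_le hsl with h | h
        · simp [← h]
        · have hslt1 : s < 1 := lt_of_le_of_ne (le_trans hsr hτ1) hs1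
          have := hdec s ⟨lt_trans hτB0 h, hslt1⟩ τB ⟨hτB0, hτB1⟩ h
          have hfnn := hf0 s hs01
          nlinarith
      rw [intervalIntegral.integral_neg] at hnn
      linarith
    · rw [intervalIntegral.integral_symm τ τB]
      have hnn : 0 ≤ ∫ s in τ..τB, ((mH s - mL s) - (mH τB - mL τB)) * f s := by
        apply intervalIntegral.integral_nonneg_of_ae_restrict hle
        filter_upwards [ae_restrict_of_ae hne0, ae_restrict_mem measurableSet_Icc]
          with s hs0 hs2
        simp only [Pi.zero_apply]
        obtain ⟨hsl, hsr⟩ := hs2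
        have hs01 : s ∈ Set.Icc (0:ℝ) 1 := ⟨le_trans hτ0 hsl, le_trans hsr hτB1.le⟩
        rcases eq_or_lt_of_le hsr with h | h
        · simp [h]
        · have hsgt0 : 0 < s := lt_of_le_of_ne (le_trans hτ0 hsl) (Ne.symm hs0)
          have := hdec τB ⟨hτB0, hτB1⟩ s ⟨hsgt0, lt_trans h hτB1⟩ h
          have hfnn := hf0 s hs01
          nlinarith
      linarith
  -- the central bound
  have hbound : ∀ τ ∈ Set.Icc (0:ℝ) 1, U τ - lamS * (C τ - B) ≤ U τB := by
    intro τ hτ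
    rw [hkey τ]
    linarith [hsign τ hτ]
  have hτBIcc : τB ∈ Set.Icc (0:ℝ) 1 := ⟨hτB0.le, hτB1.le⟩
  -- continuity of U and C
  have hUc : Continuous U := by
    have hU' : U = fun τ => (∫ s in (0:ℝ)..τ, mH s * f s) + ∫ s in τ..(1:ℝ), mL s * f s :=
      funext hU
    rw [hU']
    refine (intervalIntegral.continuous_primitive hiH 0).add ?_
    have : (fun τ => ∫ s in τ..(1:ℝ), mL s * f s)
        = fun τ => -(∫ s in (1:ℝ)..τ, mL s * f s) :=
      funext fun τ => intervalIntegral.integral_symm 1 τ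
    rw [this]
    exact (intervalIntegral.continuous_primitive hiL 1).neg
  have hCc : Continuous C := by
    have hC' : C = fun τ => cL + cH * ∫ s in (0:ℝ)..τ, f s := funext hC
    rw [hC']
    exact continuous_const.add (continuous_const.mul
      (intervalIntegral.continuous_primitive hif 0))
  -- boundedness of the inner sup sets
  have hBdd : ∀ lam : ℝ,
      BddAbove {v : ℝ | ∃ τ ∈ Set.Icc (0:ℝ) 1, v = U τ - lam * (C τ - B)} := by
    intro lam
    have himg : {v : ℝ | ∃ τ ∈ Set.Icc (0:ℝ) 1, v = U τ - lam * (C τ - B)}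
        = (fun τ => U τ - lam * (C τ - B)) '' Set.Icc 0 1 := by
      ext v
      simp [Set.mem_image, eq_comm]
    rw [himg]
    exact (isCompact_Icc.image
      (hUc.sub (continuous_const.mul (hCc.sub continuous_const)))).bddAbove
  -- membership of U τB in the inner sup sets
  have hmemS : ∀ lam : ℝ,
      U τB ∈ {v : ℝ | ∃ τ ∈ Set.Icc (0:ℝ) 1, v = U τ - lam * (C τ - B)} := by
    intro lam
    exact ⟨τB, hτBIcc, by rw [hCτB, sub_self, mul_zero, sub_zero]⟩
  -- D lamS = U τB
  have hDlamS : D lamS = U τB := by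
    rw [hD]
    refine le_antisymm (csSup_le ⟨U τB, hmemS lamS⟩ ?_) (le_csSup (hBdd lamS) (hmemS lamS))
    rintro v ⟨τ, hτ, rfl⟩
    exact hbound τ hτ
  -- Udag = U τB
  have hUdagB : Udag = U τB := by
    rw [hUdag]
    have hmemT : U τB ∈ {u : ℝ | ∃ τ ∈ Set.Icc (0:ℝ) 1, C τ ≤ B ∧ u = U τ} :=
      ⟨τB, hτBIcc, le_of_eq hCτB, rfl⟩
    refine le_antisymm (csSup_le ⟨U τB, hmemT⟩ ?_) (le_csSup ⟨U τB, ?_⟩ hmemT)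
    · rintro u ⟨τ, hτ, hCτ, rfl⟩
      have h1 := hbound τ hτ
      have h2 : lamS * (C τ - B) ≤ 0 :=
        mul_nonpos_of_nonneg_of_nonpos hlam_pos.le (by linarith)
      linarith
    · rintro u ⟨τ, hτ, hCτ, rfl⟩
      have h1 := hbound τ hτ
      have h2 : lamS * (C τ - B) ≤ 0 :=
        mul_nonpos_of_nonneg_of_nonpos hlam_pos.le (by linarith)
      linarith
  -- weak duality: every dual value is at least Udag
  have hlb : ∀ d ∈ {d : ℝ | ∃ lam : ℝ, 0 ≤ lam ∧ d = D lam}, Udag ≤ d := by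
    rintro d ⟨lam, _, rfl⟩
    rw [hD, hUdagB]
    exact le_csSup (hBdd lam) (hmemS lam)
  have hmemD : Udag ∈ {d : ℝ | ∃ lam : ℝ, 0 ≤ lam ∧ d = D lam} :=
    ⟨lamS, hlam_pos.le, by rw [hDlamS, hUdagB]⟩
  constructor
  · exact le_antisymm (csInf_le ⟨Udag, hlb⟩ hmemD) (le_csInf ⟨Udag, hmemD⟩ hlb)
  · rw [hDlamS, hUdagB]
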